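/- arXiv:math/0201257 — 6 statements merged into one kernel-verified Lean document; each statement's English description precedes it below -/
import Mathlib

section
/- Let X be a complete nonsingular toric 4-fold with T_N-invariant prime divisors D_1,…,D_n, let A be an abelian surface, and let φ : A → X be a totally nondegenerate finite morphism. If (φ*D_i)·(φ*D_j) = 0 and (φ*D_j)·(φ*D_k) = 0 for indices 1 ≤ i, j, k ≤ n, then (φ*D_i)·(φ*D_k) = 0. -/
open Finset

/-- An abelian surface over `ℂ`, recorded abstractly through its group `Div` of
divisor classes modulo algebraic equivalence, the intersection pairing, and the
effectivity and ampleness predicates.  The listed axioms are standard facts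
about divisors on an abelian surface. -/
structure AbelianSurface (Div : Type) [AddCommGroup Div] : Type where
  /-- the intersection pairing `D.E` on the abelian surface -/
  inter : Div →+ Div →+ ℤ
  inter_comm : ∀ D E : Div, inter D E = inter E D
  /-- `Effective D` ↔ `D` is the class of a (nonzero or zero) effective divisor -/
  Effective : Div → Prop
  effective_zero : Effective 0
  effective_add : ∀ {D E : Div}, Effective D → Effective E → Effective (D + E)
  /-- on an abelian surface two effective divisors intersect nonnegatively -/
  inter_nonneg_of_effective : ∀ {D E : Div}, Effective D → Effective E → 0 ≤ inter D E
  /-- `Ample D` ↔ `D` is the class of an ample divisor -/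
  Ample : Div → Prop
  /-- on an abelian surface an effective divisor with positive self-intersection is ample -/
  ample_of_effective_of_sq_pos : ∀ {D : Div}, Effective D → 0 < inter D D → Ample D
  /-- an ample divisor meets every nonzero effective divisor positively -/
  inter_pos_of_ample : ∀ {D E : Div}, Ample D → Effective E → E ≠ 0 → 0 < inter D E
  /-- an ample divisor has positive self-intersection -/
  sq_pos_of_ample : ∀ {D : Div}, Ample D → 0 < inter D D

/-- A complete nonsingular toric 4-fold `X`, presented by the primitive
generators `x_1, …, x_n ∈ N = ℤ⁴` of its fan `Σ` together with the predicate
`IsCone` recording which subsets of the rays span a cone of `Σ`. -/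
structure ToricFourfold (n : ℕ) : Type where
  /-- the set `G(Σ)` of primitive generators `x_1, …, x_n` of `Σ` in `N = ℤ⁴` -/
  gen : Fin n → Fin 4 → ℤ
  gen_injective : Function.Injective gen
  /-- `IsCone S` ↔ the rays `{x_i : i ∈ S}` span a cone of `Σ` -/
  IsCone : Finset (Fin n) → Prop
  isCone_empty : IsCone ∅
  isCone_singleton : ∀ i : Fin n, IsCone {i}
  isCone_mono : ∀ {S T : Finset (Fin n)}, S ⊆ T → IsCone T → IsCone S
  /-- nonsingularity: the generators of each cone form part of a `ℤ`-basis of `N` -/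
  nonsingular : ∀ {S : Finset (Fin n)}, IsCone S →
    ∃ b : Module.Basis (Fin 4) ℤ (Fin 4 → ℤ), ∃ ι : {x // x ∈ S} → Fin 4,
      Function.Injective ι ∧ ∀ i : {x // x ∈ S}, gen i.1 = b (ι i)
  /-- completeness: the cones of `Σ` cover `N_ℚ = ℚ⁴` -/
  complete : ∀ v : Fin 4 → ℚ, ∃ S : Finset (Fin n), IsCone S ∧
    ∃ c : Fin n → ℚ, (∀ i, 0 ≤ c i) ∧ (∀ i, i ∉ S → c i = 0) ∧
      ∀ k, v k = ∑ i, c i * (gen i k : ℚ)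

/-- A primitive collection of the fan of `X` (in the sense of Batyrev):
a minimal subset of the set of rays not spanning a cone. -/
def ToricFourfold.IsPrimitiveCollection {n : ℕ} (X : ToricFourfold n)
    (P : Finset (Fin n)) : Prop :=
  ¬ X.IsCone P ∧ ∀ Q : Finset (Fin n), Q ⊂ P → X.IsCone Q

/-- An (equivariant) isomorphism of complete nonsingular toric 4-folds,
i.e. an isomorphism of the corresponding fans. -/
def ToricFourfold.Iso {m n : ℕ} (X : ToricFourfold m) (Y : ToricFourfold n) : Prop :=
  ∃ (e : Fin m ≃ Fin n) (g : Matrix (Fin 4) (Fin 4) ℤ), IsUnit g.det ∧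
    (∀ i, Y.gen (e i) = g.mulVec (X.gen i)) ∧
    ∀ S : Finset (Fin m), X.IsCone S ↔ Y.IsCone (S.image e)

/-- A projective nonsingular toric 4-fold: a complete nonsingular toric 4-fold
together with the predicate recording which `T_N`-invariant divisors
`∑ i, c i • D i` are ample, and (projectivity) an ample effective such divisor. -/
structure ProjToricFourfold (n : ℕ) : Type extends ToricFourfold n where
  /-- `IsAmple c` ↔ the `T_N`-invariant divisor `∑ i, c i • D i` is ample on `X` -/
  IsAmple : (Fin n → ℤ) → Prop
  /-- projectivity: there is an ample effective `T_N`-invariant divisor -/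
  exists_ample : ∃ c : Fin n → ℤ, (∀ i, 0 ≤ c i) ∧ IsAmple c

/-- `X` is Fano: the anticanonical divisor `∑ i, D i` is ample. -/
def ProjToricFourfold.IsFano {n : ℕ} (X : ProjToricFourfold n) : Prop :=
  X.IsAmple fun _ => 1

/-- A totally nondegenerate finite morphism `φ : A → X` from an abelian surface
`A` to a complete nonsingular toric 4-fold `X`, recorded through the pullbacks
`C i = φ*(D i)` of the `T_N`-invariant prime divisors `D 1, …, D n` of `X`:
total nondegeneracy says that each `D i` meets `φ(A)`, so that each `C i` is a
nonzero effective divisor on `A`. -/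
structure TNDMorphism {n : ℕ} (X : ToricFourfold n) {Div : Type} [AddCommGroup Div]
    (A : AbelianSurface Div) : Type where
  /-- the pullbacks `C i = φ*(D i)` -/
  C : Fin n → Div
  effective : ∀ i, A.Effective (C i)
  /-- total nondegeneracy: `D i ∩ φ(A) ≠ ∅`, so `C i` is a nonzero effective divisor -/
  ne_zero : ∀ i, C i ≠ 0
  /-- if `{x i, x j}` spans no cone of `Σ` then `D i ∩ D j = ∅`, hence the
  pullbacks have intersection number zero -/
  inter_eq_zero : ∀ {i j : Fin n}, i ≠ j → ¬ X.IsCone {i, j} → A.inter (C i) (C j) = 0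
  /-- for every `m ∈ M` the pullback of the principal divisor
  `div 𝐞(m) = ∑ i ⟨m, x i⟩ D i` is (algebraically equivalent to) zero -/
  principal_rel : ∀ m : Fin 4 → ℤ, ∑ i, (∑ k, m k * X.gen i k) • C i = 0

/-- A totally nondegenerate finite morphism to a projective nonsingular toric
4-fold; finiteness of `φ` moreover makes pullbacks of ample divisors ample. -/
structure TNDMorphismProj {n : ℕ} (X : ProjToricFourfold n) {Div : Type} [AddCommGroup Div]
    (A : AbelianSurface Div) : Type extends TNDMorphism X.toToricFourfold A where
  /-- the pullback of an ample divisor under the finite morphism `φ` is ample -/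
  pull_ample : ∀ c : Fin n → ℤ, X.IsAmple c → A.Ample (∑ i, c i • C i)

/-- `X` admits a totally nondegenerate finite morphism from an abelian surface. -/
def ProjToricFourfold.HasTND {n : ℕ} (X : ProjToricFourfold n) : Prop :=
  ∃ (Div : Type) (inst : AddCommGroup Div) (A : @AbelianSurface Div inst),
    Nonempty (@TNDMorphismProj n X Div inst A)

/-- A totally nondegenerate embedding `φ : A ↪ X` of an abelian surface into a
projective nonsingular toric 4-fold: a totally nondegenerate finite morphism
which is a closed embedding.  Besides the finite-morphism data we record the
intersection-theoretic data available for an embedded surface: the quadruple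
intersection numbers `quad i j k l = D i · D j · D k · D l` on `X`, the class
`[A] = ∑ k l, aClass k l • (D k · D l)` of `A` in the Chow group `A²(X)`, the
compatibility `(φ*D i)·(φ*D j) = D i · D j · [A]`, and Van de Ven's relation
`c₂(X)·[A] = [A]²` where `c₂(X) = ∑_{i<j} D i · D j` for a nonsingular complete
toric variety. -/
structure TNDEmbedding {n : ℕ} (X : ProjToricFourfold n) {Div : Type} [AddCommGroup Div]
    (A : AbelianSurface Div) : Type extends TNDMorphismProj X A where
  /-- the intersection numbers `D i · D j · D k · D l` on `X` -/
  quad : Fin n → Fin n → Fin n → Fin n → ℤ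
  /-- the coefficients of the class `[A] ∈ A²(X)` in terms of the classes `D k · D l` -/
  aClass : Fin n → Fin n → ℤ
  /-- for the embedded surface `A ⊂ X`, `(φ*D i)·(φ*D j) = D i · D j · [A]` -/
  inter_eq_quad : ∀ i j : Fin n,
    A.inter (C i) (C j) = ∑ k, ∑ l, aClass k l * quad i j k l
  /-- Van de Ven's relation `c₂(X)·[A] = [A]²` -/
  van_de_ven : ∑ i, ∑ j ∈ Finset.Ioi i, A.inter (C i) (C j) =
    ∑ k, ∑ l, ∑ k', ∑ l', aClass k l * aClass k' l' * quad k l k' l'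

/-- `X` admits a totally nondegenerate embedding of an abelian surface. -/
def ProjToricFourfold.HasTNDEmbedding {n : ℕ} (X : ProjToricFourfold n) : Prop :=
  ∃ (Div : Type) (inst : AddCommGroup Div) (A : @AbelianSurface Div inst),
    Nonempty (@TNDEmbedding n X Div inst A)

/-- `ψ : Y → X` is a 2-blow-up: an equivariant blow-up of `X` along a
`T_N`-invariant subvariety of codimension 2.  On fans this is the star
subdivision of the fan of `X` at a 2-dimensional cone `{x i, x j}`, the new ray
(indexed last) being generated by `x i + x j`. -/
def IsTwoBlowUp {m n : ℕ} (Y : ProjToricFourfold m) (X : ProjToricFourfold n) : Prop :=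
  ∃ h : m = n + 1, ∃ i j : Fin n, i ≠ j ∧ X.IsCone {i, j} ∧
    (∀ k : Fin n, Y.gen (finCongr h.symm k.castSucc) = X.gen k) ∧
    Y.gen (finCongr h.symm (Fin.last n)) = X.gen i + X.gen j ∧
    ∀ S : Finset (Fin n),
      (Y.IsCone (S.image fun k => finCongr h.symm k.castSucc) ↔
        X.IsCone S ∧ ¬ {i, j} ⊆ S) ∧
      (Y.IsCone (insert (finCongr h.symm (Fin.last n))
          (S.image fun k => finCongr h.symm k.castSucc)) ↔
        ¬ {i, j} ⊆ S ∧ X.IsCone (S ∪ {i, j}))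

/-- The fan of `X` splits (after a change of coordinates in `N = ℤ⁴`) as the
product of two 2-dimensional complete fans, i.e. `X ≅ X₁ × X₂` for nonsingular
complete toric surfaces `X₁`, `X₂`.  When `X` is moreover Fano, the two factors
are nonsingular toric del Pezzo surfaces. -/
def ProjToricFourfold.IsProductOfSurfaces {n : ℕ} (X : ProjToricFourfold n) : Prop :=
  ∃ g : Matrix (Fin 4) (Fin 4) ℤ, IsUnit g.det ∧
    ∃ σ : Fin n → Bool,
      (∀ i, σ i = true → g.mulVec (X.gen i) 2 = 0 ∧ g.mulVec (X.gen i) 3 = 0) ∧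
      (∀ i, σ i = false → g.mulVec (X.gen i) 0 = 0 ∧ g.mulVec (X.gen i) 1 = 0) ∧
      ∀ S : Finset (Fin n), X.IsCone S ↔
        (X.IsCone (S.filter fun i => σ i = true) ∧ X.IsCone (S.filter fun i => σ i = false))

/-- **Lemma 3.2.** Let `X` be a complete nonsingular toric 4-fold with
`T_N`-invariant prime divisors `D 1, …, D n`, `A` an abelian surface and
`φ : A → X` a totally nondegenerate finite morphism.  If
`(φ*D i)·(φ*D j) = 0` and `(φ*D j)·(φ*D k) = 0`, then `(φ*D i)·(φ*D k) = 0`. -/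
theorem inter_eq_zero_trans {n : ℕ} (X : ToricFourfold n)
    {Div : Type} [AddCommGroup Div] (A : AbelianSurface Div)
    (φ : TNDMorphism X A) (i j k : Fin n)
    (hij : A.inter (φ.C i) (φ.C j) = 0) (hjk : A.inter (φ.C j) (φ.C k) = 0) :
    A.inter (φ.C i) (φ.C k) = 0 := by
  by_contra h
  have hik : 0 < A.inter (φ.C i) (φ.C k) :=
    lt_of_le_of_ne (A.inter_nonneg_of_effective (φ.effective i) (φ.effective k)) (Ne.symm h)
  have heff : A.Effective (φ.C i + φ.C k) := A.effective_add (φ.effective i) (φ.effective k)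
  have hsq : 0 < A.inter (φ.C i + φ.C k) (φ.C i + φ.C k) := by
    have h1 := A.inter_nonneg_of_effective (φ.effective i) (φ.effective i)
    have h2 := A.inter_nonneg_of_effective (φ.effective k) (φ.effective k)
    have hki : A.inter (φ.C k) (φ.C i) = A.inter (φ.C i) (φ.C k) := A.inter_comm _ _
    simp only [map_add, AddMonoidHom.add_apply]
    omega
  have hamp := A.ample_of_effective_of_sq_pos heff hsq
  have hpos := A.inter_pos_of_ample hamp (φ.effective j) (φ.ne_zero j)
  have : A.inter (φ.C i + φ.C k) (φ.C j) = 0 := by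
    have hkj : A.inter (φ.C k) (φ.C j) = 0 := by rw [A.inter_comm]; exact hjk
    simp only [map_add, AddMonoidHom.add_apply, hij, hkj, add_zero]
  omega
end

section
/- Let X be a projective nonsingular toric 4-fold with T_N-invariant prime divisors D_1,…,D_n. If there exists a totally nondegenerate finite morphism φ : A → X from an abelian surface A, then there exist indices 1 ≤ i < j ≤ n with (φ*D_i)·(φ*D_j) > 0. -/
open Finset

/-- **Lemma 3.4.** Let `X` be a *projective* nonsingular toric 4-fold with
`T_N`-invariant prime divisors `D 1, …, D n`.  If there exists a totally
nondegenerate finite morphism `φ : A → X` from an abelian surface `A`, then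
`(φ*D i)·(φ*D j) > 0` for some `i < j`. -/
theorem exists_inter_pos {n : ℕ} (X : ProjToricFourfold n)
    {Div : Type} [AddCommGroup Div] (A : AbelianSurface Div)
    (φ : TNDMorphismProj X A) :
    ∃ i j : Fin n, i < j ∧ 0 < A.inter (φ.C i) (φ.C j) := by
  classical
  obtain ⟨c, hc0, hca⟩ := X.exists_ample
  have hamp : A.Ample (∑ i, c i • φ.C i) := φ.pull_ample c hca
  have hH : 0 < A.inter (∑ i, c i • φ.C i) (∑ i, c i • φ.C i) :=
    A.sq_pos_of_ample hamp
  have step : ∀ E, A.inter (∑ i, c i • φ.C i) E = ∑ i, c i * A.inter (φ.C i) E := by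
    intro E
    rw [A.inter_comm, map_sum]
    exact Finset.sum_congr rfl fun i _ => by
      rw [map_zsmul, smul_eq_mul, A.inter_comm]
  have hexp : A.inter (∑ i, c i • φ.C i) (∑ i, c i • φ.C i)
      = ∑ i, ∑ j, (c i * c j) * A.inter (φ.C i) (φ.C j) := by
    rw [step]
    refine Finset.sum_congr rfl fun i _ => ?_
    rw [map_sum, Finset.mul_sum]
    exact Finset.sum_congr rfl fun j _ => by
      rw [map_zsmul, smul_eq_mul]; ring
  rw [hexp] at hH
  -- find a positive term
  have hterm : ∃ i j : Fin n, 0 < (c i * c j) * A.inter (φ.C i) (φ.C j) := by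
    by_contra hcon
    push_neg at hcon
    have : ∑ i, ∑ j, (c i * c j) * A.inter (φ.C i) (φ.C j) ≤ 0 :=
      Finset.sum_nonpos fun i _ => Finset.sum_nonpos fun j _ => hcon i j
    omega
  obtain ⟨i, j, hij⟩ := hterm
  have hpos : 0 < A.inter (φ.C i) (φ.C j) := by
    nlinarith [mul_nonneg (hc0 i) (hc0 j)]
  -- main case split
  rcases lt_trichotomy i j with h | h | h
  · exact ⟨i, j, h, hpos⟩
  · -- diagonal case: C i has positive self-intersection, hence is ample
    subst h
    have hAmp : A.Ample (φ.C i) :=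
      A.ample_of_effective_of_sq_pos (φ.effective i) hpos
    by_cases hex : ∃ j : Fin n, j ≠ i
    · obtain ⟨j, hj⟩ := hex
      have hij2 : 0 < A.inter (φ.C i) (φ.C j) :=
        A.inter_pos_of_ample hAmp (φ.effective j) (φ.ne_zero j)
      rcases lt_trichotomy i j with h | h | h
      · exact ⟨i, j, h, hij2⟩
      · exact absurd h.symm hj
      · exact ⟨j, i, h, by rwa [A.inter_comm]⟩
    · -- no other index: every j equals i, derive a contradiction
      exfalso
      push_neg at hex
      have huniv : (Finset.univ : Finset (Fin n)) = {i} := by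
        ext j; simp [hex j]
      have hgen : ∀ k, X.gen i k = 0 := by
        intro k
        have hrel := φ.principal_rel (Pi.single k 1)
        rw [huniv, Finset.sum_singleton] at hrel
        have hcoef : (∑ k', (Pi.single k 1 : Fin 4 → ℤ) k' * X.gen i k') = X.gen i k := by
          simp [Pi.single_apply, Finset.sum_ite_eq']
        rw [hcoef] at hrel
        have h0 : X.gen i k * A.inter (φ.C i) (φ.C i) = 0 := by
          have := congrArg (fun D => A.inter (φ.C i) D) hrel
          simpa [map_zsmul, smul_eq_mul] using this.symm
        rcases mul_eq_zero.mp h0 with h1 | h1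
        · exact h1
        · omega
      obtain ⟨S, _, cc, _, _, hsum⟩ := X.complete (fun _ => 1)
      have h1 := hsum 0
      have : (1 : ℚ) = 0 := by
        rw [h1]
        apply Finset.sum_eq_zero
        intro j _
        rw [hex j, hgen 0]
        simp
      norm_num at this
  · exact ⟨j, i, h, by rwa [A.inter_comm]⟩
end

section
/- Let X be a projective nonsingular toric 4-fold and φ : A → X a totally nondegenerate finite morphism from an abelian surface. Define the graph Γ_φ on vertex set {1,…,n} where {i,j} is an edge iff i ≠ j and (φ*D_i)·(φ*D_j) = 0. Then Γ_φ is not complete; in particular, since every connected component of Γ_φ is complete, Γ_φ is not connected. -/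
open Finset

/-- The graph `Γ_φ` attached to a totally nondegenerate finite morphism
`φ : A → X`: the vertices are `1, …, n` and `{i, j}` is an edge iff `i ≠ j`
and `(φ*D i)·(φ*D j) = 0`. -/
def Gamma {n : ℕ} (X : ToricFourfold n) {Div : Type} [AddCommGroup Div]
    (A : AbelianSurface Div) (φ : TNDMorphism X A) : SimpleGraph (Fin n) where
  Adj i j := i ≠ j ∧ A.inter (φ.C i) (φ.C j) = 0
  symm := ⟨fun i j h => ⟨h.1.symm, (A.inter_comm (φ.C j) (φ.C i)).trans h.2⟩⟩
  loopless := ⟨fun i h => h.1 rfl⟩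


/-- On an abelian surface, a (possibly zero) effective divisor orthogonal to a
nonzero effective divisor has self-intersection zero. -/
lemma AbelianSurface.sq_eq_zero {Div : Type} [AddCommGroup Div] (A : AbelianSurface Div)
    {C E : Div} (hC : A.Effective C) (hE : A.Effective E) (hEne : E ≠ 0)
    (h : A.inter C E = 0) : A.inter C C = 0 := by
  rcases lt_or_eq_of_le (A.inter_nonneg_of_effective hC hC) with hpos | hzero
  · have := A.inter_pos_of_ample (A.ample_of_effective_of_sq_pos hC hpos) hE hEne
    omega
  · exact hzero.symm

/-- Orthogonality to a common nonzero effective divisor propagates. -/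
lemma AbelianSurface.inter_eq_zero_trans {Div : Type} [AddCommGroup Div]
    (A : AbelianSurface Div) {Ca Cb Cc : Div}
    (ha : A.Effective Ca) (hb : A.Effective Cb) (hc : A.Effective Cc) (hbne : Cb ≠ 0)
    (hab : A.inter Ca Cb = 0) (hbc : A.inter Cb Cc = 0) : A.inter Ca Cc = 0 := by
  have hcb : A.inter Cc Cb = 0 := (A.inter_comm Cc Cb).trans hbc
  have ha2 : A.inter Ca Ca = 0 := A.sq_eq_zero ha hb hbne hab
  have hc2 : A.inter Cc Cc = 0 := A.sq_eq_zero hc hb hbne hcb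
  have hnn : 0 ≤ A.inter Ca Cc := A.inter_nonneg_of_effective ha hc
  rcases lt_or_eq_of_le hnn with hpos | hzero
  · exfalso
    have hD : A.Effective (Ca + Cc) := A.effective_add ha hc
    have hD2 : 0 < A.inter (Ca + Cc) (Ca + Cc) := by
      have hca : A.inter Cc Ca = A.inter Ca Cc := A.inter_comm Cc Ca
      simp only [map_add, AddMonoidHom.add_apply]
      omega
    have := A.inter_pos_of_ample (A.ample_of_effective_of_sq_pos hD hD2) hb hbne
    have hDb : A.inter (Ca + Cc) Cb = 0 := by
      simp only [map_add, AddMonoidHom.add_apply]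
      omega
    omega
  · exact hzero.symm

/-- A complete fan in `ℚ⁴` has at least two rays. -/
lemma ToricFourfold.two_le {n : ℕ} (X : ToricFourfold n) : 2 ≤ n := by
  by_contra hlt
  push_neg at hlt
  interval_cases n
  · obtain ⟨S, -, c, -, -, hv⟩ := X.complete (fun _ => 1)
    have := hv 0
    simp at this
  · obtain ⟨b, ι, -, hgen⟩ := X.nonsingular (X.isCone_singleton 0)
    have hne : X.gen 0 ≠ 0 := by
      rw [hgen ⟨0, Finset.mem_singleton_self 0⟩]
      exact b.ne_zero _
    obtain ⟨S, -, c, hc, -, hv⟩ := X.complete (fun k => -(X.gen 0 k : ℚ))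
    apply hne
    funext k
    have hk := hv k
    rw [Fin.sum_univ_one] at hk
    have : (c 0 + 1) * (X.gen 0 k : ℚ) = 0 := by ring_nf; linarith
    have hc0 : (0:ℚ) < c 0 + 1 := by linarith [hc 0]
    have : (X.gen 0 k : ℚ) = 0 := by
      rcases mul_eq_zero.mp this with h | h
      · exact absurd h (ne_of_gt hc0)
      · exact h
    exact_mod_cast this

/-- **Remarks 3.5 and 3.3.** Let `X` be a projective nonsingular toric 4-fold
and `φ : A → X` a totally nondegenerate finite morphism from an abelian
surface.  Then the graph `Γ_φ` is not complete; in particular (since every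
connected component of `Γ_φ` is complete) `Γ_φ` is not connected. -/
theorem gamma_not_complete_and_not_connected {n : ℕ} (X : ProjToricFourfold n)
    {Div : Type} [AddCommGroup Div] (A : AbelianSurface Div)
    (φ : TNDMorphismProj X A) :
    (¬ ∀ i j : Fin n, i ≠ j →
        (Gamma X.toToricFourfold A φ.toTNDMorphism).Adj i j) ∧
      ¬ (Gamma X.toToricFourfold A φ.toTNDMorphism).Connected := by
  have h2 : 2 ≤ n := X.toToricFourfold.two_le
  have notcomp : ¬ ∀ i j : Fin n, i ≠ j →
      (Gamma X.toToricFourfold A φ.toTNDMorphism).Adj i j := by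
    intro hcomp
    have hcross : ∀ i j : Fin n, i ≠ j → A.inter (φ.C i) (φ.C j) = 0 :=
      fun i j hij => (hcomp i j hij).2
    obtain ⟨c, hc0, hca⟩ := X.exists_ample
    have hH : A.Ample (∑ i, c i • φ.C i) := φ.pull_ample c hca
    set i0 : Fin n := ⟨0, by omega⟩
    set j0 : Fin n := ⟨1, by omega⟩
    have hij0 : i0 ≠ j0 := by simp [i0, j0, Fin.ext_iff]
    have hpos : 0 < A.inter (∑ i, c i • φ.C i) (φ.C i0) :=
      A.inter_pos_of_ample hH (φ.effective i0) (φ.ne_zero i0)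
    have hsum : A.inter (∑ i, c i • φ.C i) (φ.C i0) = c i0 * A.inter (φ.C i0) (φ.C i0) := by
      rw [A.inter_comm, map_sum, Finset.sum_eq_single i0]
      · rw [map_zsmul, smul_eq_mul, A.inter_comm]
      · intro j _ hj
        rw [map_zsmul, smul_eq_mul, A.inter_comm, hcross j i0 hj, mul_zero]
      · simp
    rw [hsum] at hpos
    have hsq : 0 < A.inter (φ.C i0) (φ.C i0) := by
      by_contra hle
      push_neg at hle
      have heq := le_antisymm hle
        (A.inter_nonneg_of_effective (φ.effective i0) (φ.effective i0))
      rw [heq, mul_zero] at hpos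
      exact lt_irrefl 0 hpos
    have := A.inter_pos_of_ample
      (A.ample_of_effective_of_sq_pos (φ.effective i0) hsq)
      (φ.effective j0) (φ.ne_zero j0)
    have := hcross i0 j0 hij0
    omega
  refine ⟨notcomp, fun hconn => notcomp ?_⟩
  intro i j hij
  refine ⟨hij, ?_⟩
  have hreach := hconn i j
  rw [SimpleGraph.reachable_iff_reflTransGen] at hreach
  have key : ∀ j, Relation.ReflTransGen
      (Gamma X.toToricFourfold A φ.toTNDMorphism).Adj i j →
      i = j ∨ A.inter (φ.C i) (φ.C j) = 0 := by
    intro j h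
    induction h with
    | refl => exact Or.inl rfl
    | tail hab hbc ih =>
      rename_i b c
      have hbc2 : A.inter (φ.C b) (φ.C c) = 0 := hbc.2
      rcases ih with rfl | hib
      · exact Or.inr hbc2
      · right
        exact A.inter_eq_zero_trans (φ.effective i) (φ.effective b) (φ.effective c)
          (φ.ne_zero b) hib hbc2
  rcases key j hreach with rfl | h
  · exact absurd rfl hij
  · exact h
end

section
/- Let X be the nonsingular projective toric 4-fold (the nonsingular toric Fano 4-fold of type J_2) whose fan Σ has primitive generators G(Σ) = {x_1,…,x_8} and primitive relations x_3 + x_6 = x_7, x_1 + x_2 + x_8 = x_4 + x_5, x_4 + x_5 + x_6 = x_1 + x_2, x_7 + x_8 = x_3, x_6 + x_8 = 0, x_3 + x_4 + x_5 = x_8, x_4 + x_5 + x_7 = 0, x_1 + x_2 + x_3 = 0, x_1 + x_2 + x_7 = x_6. Then X admits no totally nondegenerate finite morphism from an abelian surface. -/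
open Finset

lemma aux_exists_pc {n : ℕ} (X : ToricFourfold n) :
    ∀ S : Finset (Fin n), ¬ X.IsCone S → ∃ P ⊆ S, X.IsPrimitiveCollection P := by
  intro S
  induction S using Finset.strongInduction with
  | _ S ih =>
    intro h
    by_cases hall : ∀ Q : Finset (Fin n), Q ⊂ S → X.IsCone Q
    · exact ⟨S, subset_rfl, h, hall⟩
    · push_neg at hall
      obtain ⟨Q, hQS, hQ⟩ := hall
      obtain ⟨P, hPQ, hP⟩ := ih Q hQS hQ
      exact ⟨P, hPQ.trans hQS.subset, hP⟩

lemma aux_coord_sum (b : Module.Basis (Fin 4) ℤ (Fin 4 → ℤ)) (j : Fin 4) (v : Fin 4 → ℤ) :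
    ∑ k, (b.coord j (Pi.single k 1)) * v k = b.coord j v := by
  have hv : v = ∑ k, Pi.single k (v k) := (Finset.univ_sum_single v).symm
  conv_rhs => rw [hv, map_sum]
  refine Finset.sum_congr rfl fun k _ => ?_
  have h : (Pi.single k (v k) : Fin 4 → ℤ) = (v k) • (Pi.single k 1 : Fin 4 → ℤ) := by
    rw [← Pi.single_smul, smul_eq_mul, mul_one]
  rw [h, map_smul, smul_eq_mul, mul_comm]

/-- **Section 5 (b), type `𝒥₂`.** Let `X` be the nonsingular projective toric
4-fold (the nonsingular toric Fano 4-fold of type `𝒥₂`) whose fan `Σ` has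
`G(Σ) = {x_1, …, x_8}` and primitive relations `x_3 + x_6 = x_7`,
`x_1 + x_2 + x_8 = x_4 + x_5`, `x_4 + x_5 + x_6 = x_1 + x_2`, `x_7 + x_8 = x_3`,
`x_6 + x_8 = 0`, `x_3 + x_4 + x_5 = x_8`, `x_4 + x_5 + x_7 = 0`,
`x_1 + x_2 + x_3 = 0`, `x_1 + x_2 + x_7 = x_6`.  Then `X` admits no totally
nondegenerate finite morphism from an abelian surface.
Rays are indexed from `0`, so `x_k` is `X.gen (k-1)`. -/
theorem no_tnd_morphism_typeJ2 (X : ProjToricFourfold 8)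
    (hPC : ∀ P : Finset (Fin 8), X.toToricFourfold.IsPrimitiveCollection P ↔
      (P = {2, 5} ∨ P = {0, 1, 7} ∨ P = {3, 4, 5} ∨ P = {6, 7} ∨ P = {5, 7} ∨
        P = {2, 3, 4} ∨ P = {3, 4, 6} ∨ P = {0, 1, 2} ∨ P = {0, 1, 6}))
    (h1 : X.gen 2 + X.gen 5 = X.gen 6)
    (h2 : X.gen 0 + X.gen 1 + X.gen 7 = X.gen 3 + X.gen 4)
    (h3 : X.gen 3 + X.gen 4 + X.gen 5 = X.gen 0 + X.gen 1)
    (h4 : X.gen 6 + X.gen 7 = X.gen 2)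
    (h5 : X.gen 5 + X.gen 7 = 0)
    (h6 : X.gen 2 + X.gen 3 + X.gen 4 = X.gen 7)
    (h7 : X.gen 3 + X.gen 4 + X.gen 6 = 0)
    (h8 : X.gen 0 + X.gen 1 + X.gen 2 = 0)
    (h9 : X.gen 0 + X.gen 1 + X.gen 6 = X.gen 5) :
    ¬ X.HasTND := by
  rintro ⟨Div, inst, A, ⟨T⟩⟩
  letI := inst
  -- pairs that span no cone
  have hn25 : ¬ X.toToricFourfold.IsCone {2, 5} :=
    ((hPC {2, 5}).mpr (Or.inl rfl)).1
  have hn67 : ¬ X.toToricFourfold.IsCone {6, 7} :=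
    ((hPC {6, 7}).mpr (Or.inr (Or.inr (Or.inr (Or.inl rfl))))).1
  have hn57 : ¬ X.toToricFourfold.IsCone {5, 7} :=
    ((hPC {5, 7}).mpr (Or.inr (Or.inr (Or.inr (Or.inr (Or.inl rfl)))))).1
  -- {0,1,3,4} spans a cone
  have hcone : X.toToricFourfold.IsCone {0, 1, 3, 4} := by
    by_contra h
    obtain ⟨P, hPS, hP⟩ := aux_exists_pc X.toToricFourfold _ h
    rw [hPC] at hP
    rcases hP with rfl | rfl | rfl | rfl | rfl | rfl | rfl | rfl | rfl <;> revert hPS <;> decide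
  obtain ⟨b, ι, hι, hb⟩ := X.nonsingular hcone
  have m0 : (0 : Fin 8) ∈ ({0, 1, 3, 4} : Finset (Fin 8)) := by decide
  have m1 : (1 : Fin 8) ∈ ({0, 1, 3, 4} : Finset (Fin 8)) := by decide
  have m3 : (3 : Fin 8) ∈ ({0, 1, 3, 4} : Finset (Fin 8)) := by decide
  have m4 : (4 : Fin 8) ∈ ({0, 1, 3, 4} : Finset (Fin 8)) := by decide
  have hbe : ∀ (i : Fin 8) (h : i ∈ ({0, 1, 3, 4} : Finset (Fin 8))),
      X.gen i = b (ι ⟨i, h⟩) := fun i h => hb ⟨i, h⟩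
  have hcoord : ∀ j j' : Fin 4, b.coord j (b j') = if j' = j then 1 else 0 := by
    intro j j'
    rw [Module.Basis.coord_apply, b.repr_self, Finsupp.single_apply]
  have hd : ∀ (i i' : Fin 8) (h : i ∈ ({0, 1, 3, 4} : Finset (Fin 8)))
      (h' : i' ∈ ({0, 1, 3, 4} : Finset (Fin 8))),
      b.coord (ι ⟨i, h⟩) (X.gen i') = if i' = i then 1 else 0 := by
    intro i i' h h'
    rw [hbe i' h', hcoord]
    by_cases hii : i' = i
    · subst hii; simp
    · rw [if_neg, if_neg hii]
      intro he
      exact hii (congrArg Subtype.val (hι he))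
  -- expressions of the other generators
  have hg2 : X.gen 2 = -(X.gen 0 + X.gen 1) := by linear_combination h8
  have hg5 : X.gen 5 = X.gen 0 + X.gen 1 - X.gen 3 - X.gen 4 := by linear_combination h3
  have hg6 : X.gen 6 = -(X.gen 3 + X.gen 4) := by linear_combination h7
  have hg7 : X.gen 7 = X.gen 3 + X.gen 4 - X.gen 0 - X.gen 1 := by linear_combination h2
  have t2 : ∀ j : Fin 4, b.coord j (X.gen 2)
      = -(b.coord j (X.gen 0) + b.coord j (X.gen 1)) := by
    intro j; rw [hg2, map_neg, map_add]
  have t5 : ∀ j : Fin 4, b.coord j (X.gen 5)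
      = b.coord j (X.gen 0) + b.coord j (X.gen 1) - b.coord j (X.gen 3) - b.coord j (X.gen 4) := by
    intro j; rw [hg5, map_sub, map_sub, map_add]
  have t6 : ∀ j : Fin 4, b.coord j (X.gen 6)
      = -(b.coord j (X.gen 3) + b.coord j (X.gen 4)) := by
    intro j; rw [hg6, map_neg, map_add]
  have t7 : ∀ j : Fin 4, b.coord j (X.gen 7)
      = b.coord j (X.gen 3) + b.coord j (X.gen 4) - b.coord j (X.gen 0) - b.coord j (X.gen 1) := by
    intro j; rw [hg7, map_sub, map_sub, map_add]
  have key : ∀ j : Fin 4, ∑ i, (b.coord j (X.gen i)) • T.C i = 0 := by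
    intro j
    have h := T.principal_rel (fun k => b.coord j (Pi.single k 1))
    simp only [aux_coord_sum] at h
    exact h
  have mkrel : ∀ (j : Fin 4) (pv qv rv sv : ℤ),
      b.coord j (X.gen 0) = pv → b.coord j (X.gen 1) = qv →
      b.coord j (X.gen 3) = rv → b.coord j (X.gen 4) = sv →
      pv • T.C 0 + qv • T.C 1 + (-(pv + qv)) • T.C 2 + rv • T.C 3 + sv • T.C 4
        + (pv + qv - rv - sv) • T.C 5 + (-(rv + sv)) • T.C 6
        + (rv + sv - pv - qv) • T.C 7 = 0 := by
    intro j pv qv rv sv hp hq hr hs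
    have h := key j
    rw [Fin.sum_univ_eight, t2 j, t5 j, t6 j, t7 j, hp, hq, hr, hs] at h
    exact h
  -- the four relations among the pullback classes
  have R0 : T.C 0 - T.C 2 + T.C 5 - T.C 7 = 0 := by
    have h := mkrel (ι ⟨0, m0⟩) 1 0 0 0 ((hd 0 0 m0 m0).trans (if_pos rfl))
      ((hd 0 1 m0 m1).trans (if_neg (by decide))) ((hd 0 3 m0 m3).trans (if_neg (by decide)))
      ((hd 0 4 m0 m4).trans (if_neg (by decide)))
    abel_nf at h ⊢
    simp only [zero_smul, zero_add, add_zero] at h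
    exact h
  have R1 : T.C 1 - T.C 2 + T.C 5 - T.C 7 = 0 := by
    have h := mkrel (ι ⟨1, m1⟩) 0 1 0 0 ((hd 1 0 m1 m0).trans (if_neg (by decide)))
      ((hd 1 1 m1 m1).trans (if_pos rfl)) ((hd 1 3 m1 m3).trans (if_neg (by decide)))
      ((hd 1 4 m1 m4).trans (if_neg (by decide)))
    abel_nf at h ⊢
    simp only [zero_smul, zero_add, add_zero] at h
    exact h
  have R3 : T.C 3 - T.C 5 - T.C 6 + T.C 7 = 0 := by
    have h := mkrel (ι ⟨3, m3⟩) 0 0 1 0 ((hd 3 0 m3 m0).trans (if_neg (by decide)))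
      ((hd 3 1 m3 m1).trans (if_neg (by decide))) ((hd 3 3 m3 m3).trans (if_pos rfl))
      ((hd 3 4 m3 m4).trans (if_neg (by decide)))
    abel_nf at h ⊢
    simp only [zero_smul, zero_add, add_zero] at h
    exact h
  have R4 : T.C 4 - T.C 5 - T.C 6 + T.C 7 = 0 := by
    have h := mkrel (ι ⟨4, m4⟩) 0 0 0 1 ((hd 4 0 m4 m0).trans (if_neg (by decide)))
      ((hd 4 1 m4 m1).trans (if_neg (by decide))) ((hd 4 3 m4 m3).trans (if_neg (by decide)))
      ((hd 4 4 m4 m4).trans (if_pos rfl))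
    abel_nf at h ⊢
    simp only [zero_smul, zero_add, add_zero] at h
    exact h
  -- intersection numbers
  have nn : ∀ a w : Fin 8, 0 ≤ A.inter (T.C a) (T.C w) := fun a w =>
    A.inter_nonneg_of_effective (T.effective a) (T.effective w)
  have z25 : A.inter (T.C 2) (T.C 5) = 0 := T.inter_eq_zero (by decide) hn25
  have z67 : A.inter (T.C 6) (T.C 7) = 0 := T.inter_eq_zero (by decide) hn67
  have z57 : A.inter (T.C 5) (T.C 7) = 0 := T.inter_eq_zero (by decide) hn57
  have z75 : A.inter (T.C 7) (T.C 5) = 0 := (A.inter_comm _ _).trans z57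
  have flipE : ∀ (D : Div) (a w : Fin 8),
      A.inter (T.C a) (T.C w) = (A.inter.flip (T.C w)) (T.C a) := fun _ _ _ => rfl
  have E0 : A.inter (T.C 0) (T.C 5) - A.inter (T.C 2) (T.C 5) + A.inter (T.C 5) (T.C 5)
      - A.inter (T.C 7) (T.C 5) = 0 := by
    have h := congrArg (A.inter.flip (T.C 5)) R0
    simpa [map_sub, map_add, AddMonoidHom.flip_apply] using h
  have E1 : A.inter (T.C 1) (T.C 5) - A.inter (T.C 2) (T.C 5) + A.inter (T.C 5) (T.C 5)
      - A.inter (T.C 7) (T.C 5) = 0 := by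
    have h := congrArg (A.inter.flip (T.C 5)) R1
    simpa [map_sub, map_add, AddMonoidHom.flip_apply] using h
  have E3 : A.inter (T.C 3) (T.C 5) - A.inter (T.C 5) (T.C 5) - A.inter (T.C 6) (T.C 5)
      + A.inter (T.C 7) (T.C 5) = 0 := by
    have h := congrArg (A.inter.flip (T.C 5)) R3
    simpa [map_sub, map_add, AddMonoidHom.flip_apply] using h
  have E4 : A.inter (T.C 4) (T.C 5) - A.inter (T.C 5) (T.C 5) - A.inter (T.C 6) (T.C 5)
      + A.inter (T.C 7) (T.C 5) = 0 := by
    have h := congrArg (A.inter.flip (T.C 5)) R4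
    simpa [map_sub, map_add, AddMonoidHom.flip_apply] using h
  have E37 : A.inter (T.C 3) (T.C 7) - A.inter (T.C 5) (T.C 7) - A.inter (T.C 6) (T.C 7)
      + A.inter (T.C 7) (T.C 7) = 0 := by
    have h := congrArg (A.inter.flip (T.C 7)) R3
    simpa [map_sub, map_add, AddMonoidHom.flip_apply] using h
  have z55 : A.inter (T.C 5) (T.C 5) = 0 := by linarith [nn 0 5, nn 5 5]
  have z05 : A.inter (T.C 0) (T.C 5) = 0 := by linarith [nn 0 5, nn 5 5]
  have z15 : A.inter (T.C 1) (T.C 5) = 0 := by linarith [nn 1 5, nn 5 5]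
  have e65 : A.inter (T.C 6) (T.C 5) = A.inter (T.C 3) (T.C 5) := by linarith
  have e45 : A.inter (T.C 4) (T.C 5) = A.inter (T.C 3) (T.C 5) := by linarith
  have z37 : A.inter (T.C 3) (T.C 7) = 0 := by linarith [nn 3 7, nn 7 7]
  -- the ample divisor pulled back
  obtain ⟨c, hc, hamp⟩ := X.exists_ample
  have hH : A.Ample (∑ i, c i • T.C i) := T.pull_ample c hamp
  have hpos : 0 < A.inter (∑ i, c i • T.C i) (T.C 5) :=
    A.inter_pos_of_ample hH (T.effective 5) (T.ne_zero 5)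
  have hexp : A.inter (∑ i, c i • T.C i) (T.C 5)
      = ∑ i, c i * A.inter (T.C i) (T.C 5) := by
    have h : (A.inter.flip (T.C 5)) (∑ i, c i • T.C i)
        = ∑ i, c i • (A.inter.flip (T.C 5)) (T.C i) := by
      rw [map_sum]
      exact Finset.sum_congr rfl fun i _ => map_zsmul _ _ _
    simpa [AddMonoidHom.flip_apply, smul_eq_mul] using h
  rw [hexp, Fin.sum_univ_eight, z05, z15, z25, z55, z75, e65, e45] at hpos
  have hα : 0 < A.inter (T.C 3) (T.C 5) := by
    rcases lt_or_eq_of_le (nn 3 5) with h | h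
    · exact h
    · rw [← h] at hpos; simp at hpos
  -- C 3 + C 5 is ample
  have hsq : A.inter (T.C 3 + T.C 5) (T.C 3 + T.C 5)
      = A.inter (T.C 3) (T.C 3) + A.inter (T.C 3) (T.C 5)
        + (A.inter (T.C 5) (T.C 3) + A.inter (T.C 5) (T.C 5)) := by
    rw [map_add]
    simp only [AddMonoidHom.add_apply, map_add]
    linarith [A.inter_comm (T.C 3) (T.C 5)]
  have hG : A.Ample (T.C 3 + T.C 5) := by
    refine A.ample_of_effective_of_sq_pos (A.effective_add (T.effective 3) (T.effective 5)) ?_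
    rw [hsq]
    have := A.inter_comm (T.C 5) (T.C 3)
    linarith [nn 3 3]
  have hfin : 0 < A.inter (T.C 3 + T.C 5) (T.C 7) :=
    A.inter_pos_of_ample hG (T.effective 7) (T.ne_zero 7)
  have hfe : A.inter (T.C 3 + T.C 5) (T.C 7)
      = A.inter (T.C 3) (T.C 7) + A.inter (T.C 5) (T.C 7) := by
    rw [map_add]; simp
  rw [hfe, z37, z57] at hfin
  exact absurd hfin (by norm_num)
end

section
/- Let X be the nonsingular projective toric 4-fold whose fan Σ has primitive generators x_1 = (0,1,0,0), x_2 = (−1,1,0,0), x_3 = (1,0,0,0), x_4 = (0,0,1,0), x_5 = (a,b,−1,0), x_6 = (0,0,0,1), x_7 = (c,d,0,−1), x_8 = (0,−1,0,0) in N = ℤ^4 and whose primitive collections are {x_1,x_8}, {x_2,x_3}, {x_4,x_5}, {x_6,x_7}. If (a,b,c,d) is one of (0,1,0,1), (1,0,1,0), (1,0,−1,1) — giving the nonsingular toric Fano 4-folds of types L_1, L_2, L_10 respectively — then X admits no totally nondegenerate finite morphism from an abelian surface. -/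
open Finset

/-- **Section 5 (c), types `ℒ`.** Let `X` be the nonsingular projective toric
4-fold whose fan `Σ` has primitive generators `x_1 = (0,1,0,0)`,
`x_2 = (-1,1,0,0)`, `x_3 = (1,0,0,0)`, `x_4 = (0,0,1,0)`, `x_5 = (a,b,-1,0)`,
`x_6 = (0,0,0,1)`, `x_7 = (c,d,0,-1)`, `x_8 = (0,-1,0,0)` in `N = ℤ⁴` and whose
primitive collections are `{x_1,x_8}`, `{x_2,x_3}`, `{x_4,x_5}`, `{x_6,x_7}`.
If `(a,b,c,d)` is one of `(0,1,0,1)`, `(1,0,1,0)`, `(1,0,-1,1)` — giving the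
nonsingular toric Fano 4-folds of types `ℒ₁`, `ℒ₂`, `ℒ₁₀` respectively — then
`X` admits no totally nondegenerate finite morphism from an abelian surface.
Rays are indexed from `0`, so `x_k` is `X.gen (k-1)`. -/
theorem no_tnd_morphism_typeL (a b c d : ℤ) (X : ProjToricFourfold 8)
    (hg0 : X.gen 0 = ![0, 1, 0, 0]) (hg1 : X.gen 1 = ![-1, 1, 0, 0])
    (hg2 : X.gen 2 = ![1, 0, 0, 0]) (hg3 : X.gen 3 = ![0, 0, 1, 0])
    (hg4 : X.gen 4 = ![a, b, -1, 0]) (hg5 : X.gen 5 = ![0, 0, 0, 1])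
    (hg6 : X.gen 6 = ![c, d, 0, -1]) (hg7 : X.gen 7 = ![0, -1, 0, 0])
    (hPC : ∀ P : Finset (Fin 8), X.toToricFourfold.IsPrimitiveCollection P ↔
      (P = {0, 7} ∨ P = {1, 2} ∨ P = {3, 4} ∨ P = {5, 6}))
    (habcd : (a, b, c, d) = (0, 1, 0, 1) ∨ (a, b, c, d) = (1, 0, 1, 0) ∨
      (a, b, c, d) = (1, 0, -1, 1)) :
    ¬ X.HasTND := by
  rintro ⟨Div, inst, A, ⟨φ⟩⟩
  have hnc : ¬ X.IsCone {0, 7} := ((hPC {0, 7}).mpr (Or.inl rfl)).1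
  have h07 : A.inter (φ.C 0) (φ.C 7) = 0 := φ.inter_eq_zero (by decide) hnc
  have key : ∀ m : Fin 4 → ℤ,
      ∑ i, (∑ k, m k * X.gen i k) * A.inter (φ.C 0) (φ.C i) = 0 := by
    intro m
    have h := congrArg (A.inter (φ.C 0)) (φ.principal_rel m)
    simpa [map_sum, map_zsmul, smul_eq_mul] using h
  have hnn : ∀ i, 0 ≤ A.inter (φ.C 0) (φ.C i) := fun i =>
    A.inter_nonneg_of_effective (φ.effective 0) (φ.effective i)
  have h0 := hnn 0; have h1 := hnn 1; have h2 := hnn 2; have h3 := hnn 3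
  have h4 := hnn 4; have h5 := hnn 5; have h6 := hnn 6; have h7 := hnn 7
  obtain ⟨c, hcnn, hamp⟩ := X.exists_ample
  have hA : A.Ample (∑ i, c i • φ.C i) := φ.pull_ample c hamp
  have hpos : 0 < A.inter (∑ i, c i • φ.C i) (φ.C 0) :=
    A.inter_pos_of_ample hA (φ.effective 0) (φ.ne_zero 0)
  have hval : A.inter (∑ i, c i • φ.C i) (φ.C 0) = ∑ i, c i * A.inter (φ.C 0) (φ.C i) := by
    rw [A.inter_comm]
    simp [map_sum, map_zsmul, smul_eq_mul]
  rw [hval] at hpos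
  simp only [Prod.mk.injEq] at habcd
  obtain ⟨rfl, rfl, rfl, rfl⟩ | ⟨rfl, rfl, rfl, rfl⟩ | ⟨rfl, rfl, rfl, rfl⟩ := habcd <;>
  · have k0 := key ![1, 0, 0, 0]
    have k1 := key ![0, 1, 0, 0]
    have k2 := key ![0, 0, 1, 0]
    have k3 := key ![0, 0, 0, 1]
    simp only [Fin.sum_univ_eight, Fin.sum_univ_four, hg0, hg1, hg2, hg3, hg4, hg5, hg6, hg7,
      Matrix.cons_val_zero, Matrix.cons_val_one, Matrix.head_cons, Matrix.cons_val_two,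
      Matrix.tail_cons, Matrix.cons_val_three, Matrix.cons_val_fin_one] at k0 k1 k2 k3
    norm_num at k0 k1 k2 k3
    have z0 : A.inter (φ.C 0) (φ.C 0) = 0 := by linarith
    have z1 : A.inter (φ.C 0) (φ.C 1) = 0 := by linarith
    have z2 : A.inter (φ.C 0) (φ.C 2) = 0 := by linarith
    have z3 : A.inter (φ.C 0) (φ.C 3) = 0 := by linarith
    have z4 : A.inter (φ.C 0) (φ.C 4) = 0 := by linarith
    have z5 : A.inter (φ.C 0) (φ.C 5) = 0 := by linarith
    have z6 : A.inter (φ.C 0) (φ.C 6) = 0 := by linarith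
    simp only [Fin.sum_univ_eight, z0, z1, z2, z3, z4, z5, z6, h07] at hpos
    norm_num at hpos
end

section
/- Let X be the nonsingular projective toric 4-fold whose fan Σ has primitive generators x_1 = (1,0,0,0), x_2 = (0,1,0,0), x_3 = (−1,−1,1,1), x_4 = (0,0,1,0), x_5 = (a,0,−1,0), x_6 = (0,0,0,1), x_7 = (ac+b,0,−c,−1), x_8 = (−1,0,0,0) in N = ℤ^4 and whose primitive collections are {x_1,x_8}, {x_1,x_2,x_3}, {x_4,x_6,x_8}, {x_4,x_5}, {x_6,x_7}, {x_2,x_3,x_5}, {x_2,x_3,x_7}. If (a,b,c) is one of (0,0,0), (1,1,0), (1,0,1), (1,0,0) — giving the nonsingular toric Fano 4-folds of types M_1, M_2, M_3, M_4 respectively — then X admits no totally nondegenerate finite morphism from an abelian surface. -/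
open Finset

private lemma inter_sum_left' {Div : Type} [AddCommGroup Div] (A : AbelianSurface Div) {m : ℕ}
    (n : Fin m → ℤ) (C : Fin m → Div) (E : Div) :
    A.inter (∑ i, n i • C i) E = ∑ i, n i * A.inter (C i) E := by
  simp [map_sum, AddMonoidHom.finset_sum_apply, map_zsmul, smul_eq_mul]

private lemma inter_add_left' {Div : Type} [AddCommGroup Div] (A : AbelianSurface Div)
    (x y z : Div) : A.inter (x + y) z = A.inter x z + A.inter y z := by
  simp [map_add, AddMonoidHom.add_apply]

/-- **Section 5 (e), types `ℳ`.** Let `X` be the nonsingular projective toric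
4-fold whose fan `Σ` has primitive generators `x_1 = (1,0,0,0)`,
`x_2 = (0,1,0,0)`, `x_3 = (-1,-1,1,1)`, `x_4 = (0,0,1,0)`, `x_5 = (a,0,-1,0)`,
`x_6 = (0,0,0,1)`, `x_7 = (ac+b,0,-c,-1)`, `x_8 = (-1,0,0,0)` in `N = ℤ⁴` and
whose primitive collections are `{x_1,x_8}`, `{x_1,x_2,x_3}`, `{x_4,x_6,x_8}`,
`{x_4,x_5}`, `{x_6,x_7}`, `{x_2,x_3,x_5}`, `{x_2,x_3,x_7}`.  If `(a,b,c)` is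
one of `(0,0,0)`, `(1,1,0)`, `(1,0,1)`, `(1,0,0)` — giving the nonsingular
toric Fano 4-folds of types `ℳ₁`, `ℳ₂`, `ℳ₃`, `ℳ₄` respectively — then `X`
admits no totally nondegenerate finite morphism from an abelian surface.
Rays are indexed from `0`, so `x_k` is `X.gen (k-1)`. -/
theorem no_tnd_morphism_typeM (a b c : ℤ) (X : ProjToricFourfold 8)
    (hg0 : X.gen 0 = ![1, 0, 0, 0]) (hg1 : X.gen 1 = ![0, 1, 0, 0])
    (hg2 : X.gen 2 = ![-1, -1, 1, 1]) (hg3 : X.gen 3 = ![0, 0, 1, 0])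
    (hg4 : X.gen 4 = ![a, 0, -1, 0]) (hg5 : X.gen 5 = ![0, 0, 0, 1])
    (hg6 : X.gen 6 = ![a * c + b, 0, -c, -1]) (hg7 : X.gen 7 = ![-1, 0, 0, 0])
    (hPC : ∀ P : Finset (Fin 8), X.toToricFourfold.IsPrimitiveCollection P ↔
      (P = {0, 7} ∨ P = {0, 1, 2} ∨ P = {3, 5, 7} ∨ P = {3, 4} ∨ P = {5, 6} ∨
        P = {1, 2, 4} ∨ P = {1, 2, 6}))
    (habc : (a, b, c) = (0, 0, 0) ∨ (a, b, c) = (1, 1, 0) ∨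
      (a, b, c) = (1, 0, 1) ∨ (a, b, c) = (1, 0, 0)) :
    ¬ X.HasTND := by
  rintro ⟨Div, inst, A, ⟨φ⟩⟩
  -- linear relations among the intersection numbers coming from principal divisors
  have key : ∀ (m : Fin 4 → ℤ) (j : Fin 8),
      ∑ i, (∑ k, m k * X.gen i k) * A.inter (φ.C i) (φ.C j) = 0 := by
    intro m j
    have h := congrArg (fun D => A.inter D (φ.C j)) (φ.principal_rel m)
    simpa [inter_sum_left'] using h
  have N : ∀ i j : Fin 8, 0 ≤ A.inter (φ.C i) (φ.C j) :=
    fun i j => A.inter_nonneg_of_effective (φ.effective i) (φ.effective j)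
  have S : ∀ i j : Fin 8, A.inter (φ.C i) (φ.C j) = A.inter (φ.C j) (φ.C i) :=
    fun i j => A.inter_comm _ _
  -- vanishing intersections from 2-element primitive collections
  have hz07 : A.inter (φ.C 0) (φ.C 7) = 0 :=
    φ.inter_eq_zero (by decide) ((hPC {0, 7}).mpr (Or.inl rfl)).1
  have hz34 : A.inter (φ.C 3) (φ.C 4) = 0 :=
    φ.inter_eq_zero (by decide)
      ((hPC {3, 4}).mpr (Or.inr (Or.inr (Or.inr (Or.inl rfl))))).1
  have hz56 : A.inter (φ.C 5) (φ.C 6) = 0 :=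
    φ.inter_eq_zero (by decide)
      ((hPC {5, 6}).mpr (Or.inr (Or.inr (Or.inr (Or.inr (Or.inl rfl)))))).1
  -- the ample divisor pulled back
  obtain ⟨cam, hcam, hampc⟩ := X.exists_ample
  have HA : A.Ample (∑ i, cam i • φ.C i) := φ.pull_ample cam hampc
  have hH : ∀ j : Fin 8, 0 < ∑ i, cam i * A.inter (φ.C i) (φ.C j) := by
    intro j
    have h := A.inter_pos_of_ample HA (φ.effective j) (φ.ne_zero j)
    rwa [inter_sum_left'] at h
  -- parameter-free relations (columns 1 and 3 of the generator matrix)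
  have U : ∀ j : Fin 8, A.inter (φ.C 1) (φ.C j) = A.inter (φ.C 2) (φ.C j) := by
    intro j
    have h := key ![0, 1, 0, 0] j
    simp [Fin.sum_univ_eight, Fin.sum_univ_four, hg0, hg1, hg2, hg3, hg4, hg5, hg6, hg7] at h
    linarith
  have T : ∀ j : Fin 8,
      A.inter (φ.C 6) (φ.C j) = A.inter (φ.C 2) (φ.C j) + A.inter (φ.C 5) (φ.C j) := by
    intro j
    have h := key ![0, 0, 0, 1] j
    simp [Fin.sum_univ_eight, Fin.sum_univ_four, hg0, hg1, hg2, hg3, hg4, hg5, hg6, hg7] at h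
    linarith
  rcases habc with h | h | h | h <;>
    (simp only [Prod.mk.injEq] at h; obtain ⟨ha, hb, hc⟩ := h; subst ha; subst hb; subst hc)
  -- Case ℳ₁ : (a,b,c) = (0,0,0)
  · have V : ∀ j : Fin 8,
        A.inter (φ.C 4) (φ.C j) = A.inter (φ.C 2) (φ.C j) + A.inter (φ.C 3) (φ.C j) := by
      intro j
      have h := key ![0, 0, 1, 0] j
      simp [Fin.sum_univ_eight, Fin.sum_univ_four, hg0, hg1, hg2, hg3, hg4, hg5, hg6, hg7] at h
      linarith
    have W : ∀ j : Fin 8,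
        A.inter (φ.C 7) (φ.C j) = A.inter (φ.C 0) (φ.C j) - A.inter (φ.C 2) (φ.C j) := by
      intro j
      have h := key ![1, 0, 0, 0] j
      simp [Fin.sum_univ_eight, Fin.sum_univ_four, hg0, hg1, hg2, hg3, hg4, hg5, hg6, hg7] at h
      linarith
    have e25 : A.inter (φ.C 2) (φ.C 5) = 0 := by
      have h65 : A.inter (φ.C 6) (φ.C 5) = 0 := (S 6 5).trans hz56
      have := T 5
      have h25 := S 2 5
      linarith [N 2 5, N 5 5, S 5 2]
    have e23 : A.inter (φ.C 2) (φ.C 3) = 0 := by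
      have h43 : A.inter (φ.C 4) (φ.C 3) = 0 := (S 4 3).trans hz34
      have := V 3
      linarith [N 2 3, N 3 3]
    have e020 : A.inter (φ.C 2) (φ.C 0) = A.inter (φ.C 0) (φ.C 0) := by
      have h70 : A.inter (φ.C 7) (φ.C 0) = 0 := (S 7 0).trans hz07
      linarith [W 0]
    have e72 : A.inter (φ.C 7) (φ.C 2) = 0 := by
      have h27 := S 2 7
      have h77 := W 7
      have h72 := W 2
      linarith [N 7 7, N 7 2, S 7 2, S 0 2, S 2 0, hz07]
    have e22 : A.inter (φ.C 2) (φ.C 2) = A.inter (φ.C 0) (φ.C 0) := by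
      linarith [W 2, S 0 2, S 2 0, e72]
    rcases (N 0 0).lt_or_eq with hp | hp
    · -- q00 > 0 : C0 + C2 is ample but meets C7 trivially
      have effD := A.effective_add (φ.effective 0) (φ.effective 2)
      have hsq : 0 < A.inter (φ.C 0 + φ.C 2) (φ.C 0 + φ.C 2) := by
        rw [inter_add_left' A, map_add, map_add]
        linarith [S 0 2, S 2 0, e020, e22]
      have amp := A.ample_of_effective_of_sq_pos effD hsq
      have hpos := A.inter_pos_of_ample amp (φ.effective 7) (φ.ne_zero 7)
      rw [inter_add_left' A] at hpos
      linarith [hz07, e72, S 2 7]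
    · -- q00 = 0 : C2 is orthogonal to everything, contradicting ampleness of H
      have z02 : A.inter (φ.C 0) (φ.C 2) = 0 := by linarith [S 0 2, e020, e22, S 2 0]
      have z22 : A.inter (φ.C 2) (φ.C 2) = 0 := by linarith [e22]
      have z12 : A.inter (φ.C 1) (φ.C 2) = 0 := by rw [U 2]; exact z22
      have z32 : A.inter (φ.C 3) (φ.C 2) = 0 := by rw [S 3 2]; exact e23
      have z52 : A.inter (φ.C 5) (φ.C 2) = 0 := by rw [S 5 2]; exact e25
      have z42 : A.inter (φ.C 4) (φ.C 2) = 0 := by rw [V 2, z22, z32]; ring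
      have z62 : A.inter (φ.C 6) (φ.C 2) = 0 := by rw [T 2, z22, z52]; ring
      have h := hH 2
      simp [Fin.sum_univ_eight, z02, z12, z22, z32, z42, z52, z62, e72] at h
  -- Case ℳ₂ : (a,b,c) = (1,1,0)
  · have V : ∀ j : Fin 8,
        A.inter (φ.C 4) (φ.C j) = A.inter (φ.C 2) (φ.C j) + A.inter (φ.C 3) (φ.C j) := by
      intro j
      have h := key ![0, 0, 1, 0] j
      simp [Fin.sum_univ_eight, Fin.sum_univ_four, hg0, hg1, hg2, hg3, hg4, hg5, hg6, hg7] at h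
      linarith
    have W : ∀ j : Fin 8,
        A.inter (φ.C 7) (φ.C j) = A.inter (φ.C 0) (φ.C j) - A.inter (φ.C 2) (φ.C j)
          + A.inter (φ.C 4) (φ.C j) + A.inter (φ.C 6) (φ.C j) := by
      intro j
      have h := key ![1, 0, 0, 0] j
      simp [Fin.sum_univ_eight, Fin.sum_univ_four, hg0, hg1, hg2, hg3, hg4, hg5, hg6, hg7] at h
      linarith
    have h70 : A.inter (φ.C 7) (φ.C 0) = 0 := (S 7 0).trans hz07
    have z00 : A.inter (φ.C 0) (φ.C 0) = 0 := by
      linarith [W 0, V 0, T 0, N 0 0, N 3 0, N 2 0, N 5 0]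
    have z30 : A.inter (φ.C 3) (φ.C 0) = 0 := by
      linarith [W 0, V 0, T 0, N 0 0, N 3 0, N 2 0, N 5 0]
    have z20 : A.inter (φ.C 2) (φ.C 0) = 0 := by
      linarith [W 0, V 0, T 0, N 0 0, N 3 0, N 2 0, N 5 0]
    have z50 : A.inter (φ.C 5) (φ.C 0) = 0 := by
      linarith [W 0, V 0, T 0, N 0 0, N 3 0, N 2 0, N 5 0]
    have z10 : A.inter (φ.C 1) (φ.C 0) = 0 := by rw [U 0]; exact z20
    have z40 : A.inter (φ.C 4) (φ.C 0) = 0 := by rw [V 0, z20, z30]; ring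
    have z60 : A.inter (φ.C 6) (φ.C 0) = 0 := by rw [T 0, z20, z50]; ring
    have h := hH 0
    simp [Fin.sum_univ_eight, z00, z10, z20, z30, z40, z50, z60, h70] at h
  -- Case ℳ₃ : (a,b,c) = (1,0,1)
  · have V : ∀ j : Fin 8,
        A.inter (φ.C 4) (φ.C j) + A.inter (φ.C 6) (φ.C j)
          = A.inter (φ.C 2) (φ.C j) + A.inter (φ.C 3) (φ.C j) := by
      intro j
      have h := key ![0, 0, 1, 0] j
      simp [Fin.sum_univ_eight, Fin.sum_univ_four, hg0, hg1, hg2, hg3, hg4, hg5, hg6, hg7] at h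
      linarith
    have W : ∀ j : Fin 8,
        A.inter (φ.C 7) (φ.C j) = A.inter (φ.C 0) (φ.C j) - A.inter (φ.C 2) (φ.C j)
          + A.inter (φ.C 4) (φ.C j) + A.inter (φ.C 6) (φ.C j) := by
      intro j
      have h := key ![1, 0, 0, 0] j
      simp [Fin.sum_univ_eight, Fin.sum_univ_four, hg0, hg1, hg2, hg3, hg4, hg5, hg6, hg7] at h
      linarith
    have h70 : A.inter (φ.C 7) (φ.C 0) = 0 := (S 7 0).trans hz07
    have z00 : A.inter (φ.C 0) (φ.C 0) = 0 := by
      linarith [W 0, V 0, N 0 0, N 3 0]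
    have z30 : A.inter (φ.C 3) (φ.C 0) = 0 := by
      linarith [W 0, V 0, N 0 0, N 3 0]
    have e25 : A.inter (φ.C 2) (φ.C 5) = 0 := by
      have h65 : A.inter (φ.C 6) (φ.C 5) = 0 := (S 6 5).trans hz56
      linarith [T 5, N 2 5, N 5 5]
    have e55 : A.inter (φ.C 5) (φ.C 5) = 0 := by
      have h65 : A.inter (φ.C 6) (φ.C 5) = 0 := (S 6 5).trans hz56
      linarith [T 5, N 2 5, N 5 5]
    have h43 : A.inter (φ.C 4) (φ.C 3) = 0 := (S 4 3).trans hz34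
    have e3353 : A.inter (φ.C 3) (φ.C 3) = A.inter (φ.C 5) (φ.C 3) := by
      linarith [V 3, T 3]
    have e45 : A.inter (φ.C 4) (φ.C 5) = A.inter (φ.C 3) (φ.C 5) := by
      have h65 : A.inter (φ.C 6) (φ.C 5) = 0 := (S 6 5).trans hz56
      linarith [V 5, e25]
    have z33 : A.inter (φ.C 3) (φ.C 3) = 0 := by
      have h34 : A.inter (φ.C 3) (φ.C 4) = 0 := hz34
      have h54 : A.inter (φ.C 5) (φ.C 4) = A.inter (φ.C 3) (φ.C 5) := by
        rw [S 5 4]; exact e45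
      have h44 : A.inter (φ.C 4) (φ.C 4)
          = A.inter (φ.C 3) (φ.C 4) - A.inter (φ.C 5) (φ.C 4) := by
        linarith [V 4, T 4]
      linarith [N 4 4, N 3 3, S 3 5, e3353, h44, h54, h34]
    have z53 : A.inter (φ.C 5) (φ.C 3) = 0 := by linarith [e3353]
    have z03 : A.inter (φ.C 0) (φ.C 3) = (0 : ℤ) := by rw [S 0 3]; exact z30
    have e63 : A.inter (φ.C 6) (φ.C 3) = A.inter (φ.C 2) (φ.C 3) := by
      rw [T 3, z53, add_zero]
    have e13 : A.inter (φ.C 1) (φ.C 3) = A.inter (φ.C 2) (φ.C 3) := U 3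
    have z43 : A.inter (φ.C 4) (φ.C 3) = 0 := h43
    have z73 : A.inter (φ.C 7) (φ.C 3) = 0 := by
      rw [W 3, z03, z43, e63]; ring
    rcases (N 2 3).lt_or_eq with hp | hp
    · -- q23 > 0 : C2 + C3 is ample but meets C5 trivially
      have effD := A.effective_add (φ.effective 2) (φ.effective 3)
      have hsq : 0 < A.inter (φ.C 2 + φ.C 3) (φ.C 2 + φ.C 3) := by
        rw [inter_add_left' A, map_add, map_add]
        linarith [S 3 2, N 2 2, z33]
      have amp := A.ample_of_effective_of_sq_pos effD hsq
      have hpos := A.inter_pos_of_ample amp (φ.effective 5) (φ.ne_zero 5)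
      rw [inter_add_left' A] at hpos
      linarith [e25, S 3 5, z53]
    · -- q23 = 0 : C3 orthogonal to H
      have h := hH 3
      simp [Fin.sum_univ_eight, z03, e13, z33, z43, z53, e63, z73, ← hp] at h
  -- Case ℳ₄ : (a,b,c) = (1,0,0)
  · have V : ∀ j : Fin 8,
        A.inter (φ.C 4) (φ.C j) = A.inter (φ.C 2) (φ.C j) + A.inter (φ.C 3) (φ.C j) := by
      intro j
      have h := key ![0, 0, 1, 0] j
      simp [Fin.sum_univ_eight, Fin.sum_univ_four, hg0, hg1, hg2, hg3, hg4, hg5, hg6, hg7] at h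
      linarith
    have W : ∀ j : Fin 8,
        A.inter (φ.C 7) (φ.C j) = A.inter (φ.C 0) (φ.C j) - A.inter (φ.C 2) (φ.C j)
          + A.inter (φ.C 4) (φ.C j) := by
      intro j
      have h := key ![1, 0, 0, 0] j
      simp [Fin.sum_univ_eight, Fin.sum_univ_four, hg0, hg1, hg2, hg3, hg4, hg5, hg6, hg7] at h
      linarith
    have h70 : A.inter (φ.C 7) (φ.C 0) = 0 := (S 7 0).trans hz07
    have z00 : A.inter (φ.C 0) (φ.C 0) = 0 := by
      linarith [W 0, V 0, N 0 0, N 3 0]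
    have z30 : A.inter (φ.C 3) (φ.C 0) = 0 := by
      linarith [W 0, V 0, N 0 0, N 3 0]
    have e25 : A.inter (φ.C 2) (φ.C 5) = 0 := by
      have h65 : A.inter (φ.C 6) (φ.C 5) = 0 := (S 6 5).trans hz56
      linarith [T 5, N 2 5, N 5 5]
    have e55 : A.inter (φ.C 5) (φ.C 5) = 0 := by
      have h65 : A.inter (φ.C 6) (φ.C 5) = 0 := (S 6 5).trans hz56
      linarith [T 5, N 2 5, N 5 5]
    have h43 : A.inter (φ.C 4) (φ.C 3) = 0 := (S 4 3).trans hz34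
    have e23 : A.inter (φ.C 2) (φ.C 3) = 0 := by linarith [V 3, N 2 3, N 3 3]
    have z33 : A.inter (φ.C 3) (φ.C 3) = 0 := by linarith [V 3, N 2 3, N 3 3]
    have z03 : A.inter (φ.C 0) (φ.C 3) = (0 : ℤ) := by rw [S 0 3]; exact z30
    have e13 : A.inter (φ.C 1) (φ.C 3) = 0 := by rw [U 3]; exact e23
    have e63 : A.inter (φ.C 6) (φ.C 3) = A.inter (φ.C 5) (φ.C 3) := by
      rw [T 3, e23, zero_add]
    have z73 : A.inter (φ.C 7) (φ.C 3) = 0 := by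
      rw [W 3, z03, e23, h43]; ring
    rcases (N 5 3).lt_or_eq with hp | hp
    · -- q53 > 0 : C3 + C5 is ample but meets C2 trivially
      have effD := A.effective_add (φ.effective 3) (φ.effective 5)
      have hsq : 0 < A.inter (φ.C 3 + φ.C 5) (φ.C 3 + φ.C 5) := by
        rw [inter_add_left' A, map_add, map_add]
        linarith [S 3 5, z33, e55]
      have amp := A.ample_of_effective_of_sq_pos effD hsq
      have hpos := A.inter_pos_of_ample amp (φ.effective 2) (φ.ne_zero 2)
      rw [inter_add_left' A] at hpos
      linarith [S 3 2, e23, S 5 2, e25]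
    · -- q53 = 0 : C3 orthogonal to H
      have h := hH 3
      simp [Fin.sum_univ_eight, z03, e13, e23, z33, h43, e63, z73, ← hp] at h
end
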